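/- arXiv:2212.11262 — 3 statements merged into one kernel-verified Lean document; each statement's English description precedes it below -/
import Mathlib

section
/- Let F be a finite field and n ≥ k ≥ 2. Suppose V ∈ F^{k×n} has all k×k minors nonzero (V is MDS), and suppose that for all A1, A2, A3 ⊆ [n] with A2 ≠ A3, |A1| = 2, |A2| = |A3| = k−1, and A1 disjoint from A2 ∪ A3, the column spans satisfy span(V_{A1}) ∩ span(V_{A2}) ∩ span(V_{A3}) = 0. Then |F| ≥ C(n−2, k−1) − 1. -/
/-- Span of the columns of `V` indexed by `A`. -/
def colSpan {F : Type*} [Field F] {k n : ℕ} (V : Matrix (Fin k) (Fin n) F)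
    (A : Finset (Fin n)) : Submodule F (Fin k → F) :=
  Submodule.span F ((fun j => fun i => V i j) '' (A : Set (Fin n)))

theorem stmt_1 (F : Type*) [Field F] [Fintype F] (n k : ℕ) (hk : 2 ≤ k) (hn : k ≤ n)
    (V : Matrix (Fin k) (Fin n) F)
    (hMDS : ∀ f : Fin k → Fin n, Function.Injective f → (V.submatrix id f).det ≠ 0)
    (hInt : ∀ A1 A2 A3 : Finset (Fin n), A2 ≠ A3 → A1.card = 2 →
      A2.card = k - 1 → A3.card = k - 1 → Disjoint A1 (A2 ∪ A3) →
      colSpan V A1 ⊓ colSpan V A2 ⊓ colSpan V A3 = ⊥) :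
    Nat.choose (n - 2) (k - 1) - 1 ≤ Fintype.card F := by
  classical
  set col : Fin n → (Fin k → F) := fun j i => V i j with hcoldef
  -- Any ≤ k columns are linearly independent (as a statement about coefficients).
  have indep : ∀ s : Finset (Fin n), s.card ≤ k → ∀ c : Fin n → F,
      ∑ j ∈ s, c j • col j = 0 → ∀ j ∈ s, c j = 0 := by
    intro s hs c hsum j hj
    obtain ⟨t, hst, htc⟩ := Finset.exists_superset_card_eq hs
      (by rw [Fintype.card_fin]; exact hn)
    set e : Fin k ≃ {x // x ∈ t} := (t.equivFin.trans (finCongr htc)).symm with he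
    set f : Fin k → Fin n := fun a => (e a : Fin n) with hfd
    have hf : Function.Injective f := fun a b h => e.injective (Subtype.ext h)
    have hdet := hMDS f hf
    have himg : Finset.univ.image f = t := by
      apply Finset.eq_of_subset_of_card_le
      · intro x hx
        simp only [Finset.mem_image] at hx
        obtain ⟨a, -, rfl⟩ := hx
        exact (e a).2
      · rw [Finset.card_image_of_injective _ hf, htc, Finset.card_univ, Fintype.card_fin]
    set c' : Fin n → F := fun x => if x ∈ s then c x else 0 with hc'
    have hmv : (V.submatrix id f).mulVec (fun a => c' (f a)) = 0 := by
      funext i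
      have h0 : (∑ j ∈ s, c j • col j) i = 0 := by rw [hsum]; rfl
      simp only [Finset.sum_apply, Pi.smul_apply, smul_eq_mul] at h0
      show ∑ a, V.submatrix id f i a * c' (f a) = 0
      have step1 : ∑ a, V.submatrix id f i a * c' (f a)
          = ∑ x ∈ t, V i x * c' x := by
        rw [← himg, Finset.sum_image (fun a _ b _ h => hf h)]
        rfl
      rw [step1]
      rw [← Finset.sum_subset hst (fun x _ hxs => by simp [hc', hxs])]
      rw [← h0]
      apply Finset.sum_congr rfl
      intro x hx
      simp [hc', hx, hcoldef, mul_comm]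
    have hv := Matrix.eq_zero_of_mulVec_eq_zero hdet hmv
    have hjt : j ∈ t := hst hj
    have hj' : j ∈ Finset.univ.image f := by rw [himg]; exact hjt
    obtain ⟨a, -, ha⟩ := Finset.mem_image.mp hj'
    have := congrFun hv a
    simp only [Pi.zero_apply, ha] at this
    simpa [hc', hj] using this
  have hn2 : 2 ≤ n := le_trans hk hn
  set p : Fin n := ⟨0, by omega⟩ with hp
  set q : Fin n := ⟨1, by omega⟩ with hq
  have hpq : p ≠ q := by simp [hp, hq, Fin.ext_iff]
  have hPQcard : ({p, q} : Finset (Fin n)).card = 2 := Finset.card_pair hpq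
  set S : Finset (Finset (Fin n)) :=
    Finset.powersetCard (k - 1) (Finset.univ \ {p, q}) with hS
  have hScard : S.card = Nat.choose (n - 2) (k - 1) := by
    rw [hS, Finset.card_powersetCard, Finset.card_sdiff_of_subset (Finset.subset_univ _),
      hPQcard, Finset.card_univ, Fintype.card_fin]
  -- existence of the scalar for each A ∈ S
  have key : ∀ A : Finset (Fin n), ∃ c : F, A ∈ S → c • col p + col q ∈ colSpan V A := by
    intro A
    by_cases hA : A ∈ S
    swap
    · exact ⟨0, fun h => absurd h hA⟩
    obtain ⟨hAsub, hAcard⟩ := Finset.mem_powersetCard.mp hA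
    have hpA : p ∉ A := fun h => by have := hAsub h; simp at this
    have hqA : q ∉ A := fun h => by have := hAsub h; simp at this
    have hpqA : p ∉ insert q A := by simp [hpq, hpA]
    set t : Finset (Fin n) := insert p (insert q A) with ht
    have htcard : t.card = k + 1 := by
      rw [ht, Finset.card_insert_of_notMem hpqA, Finset.card_insert_of_notMem hqA, hAcard]
      omega
    have hni : ¬ LinearIndependent F (fun x : {y // y ∈ t} => col x) := by
      intro h
      have hle := h.fintype_card_le_finrank
      rw [Fintype.card_coe, htcard, Module.finrank_fin_fun] at hle
      omega
    rw [Fintype.not_linearIndependent_iff] at hni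
    obtain ⟨g, hg0, a₀, ha₀⟩ := hni
    set c : Fin n → F := fun j => if h : j ∈ t then g ⟨j, h⟩ else 0 with hc
    have hsum : ∑ j ∈ t, c j • col j = 0 := by
      rw [← hg0, ← Finset.sum_coe_sort t (fun j => c j • col j)]
      apply Finset.sum_congr rfl
      intro x _
      simp [hc, x.2]
    have hsplit : c p • col p + (c q • col q + ∑ j ∈ A, c j • col j) = 0 := by
      rw [← hsum, ht, Finset.sum_insert hpqA, Finset.sum_insert hqA]
    have hcq : c q ≠ 0 := by
      intro hcq0
      have hsum' : ∑ j ∈ insert p A, c j • col j = 0 := by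
        rw [Finset.sum_insert hpA]
        rw [hcq0, zero_smul, zero_add] at hsplit
        exact hsplit
      have hz := indep (insert p A) (by rw [Finset.card_insert_of_notMem hpA, hAcard]; omega)
        c hsum'
      have ha₀t : (a₀ : Fin n) ∈ t := a₀.2
      have hca₀ : c (a₀ : Fin n) = g a₀ := by simp [hc, a₀.2]
      have ha₀t' : (a₀ : Fin n) = p ∨ (a₀ : Fin n) = q ∨ (a₀ : Fin n) ∈ A := by
        have h := ha₀t
        simp only [ht, Finset.mem_insert] at h
        exact h
      have : c (a₀ : Fin n) = 0 := by
        rcases ha₀t' with h1 | h2 | h3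
        · exact hz _ (by rw [h1]; exact Finset.mem_insert_self _ _)
        · rw [h2]; exact hcq0
        · exact hz _ (Finset.mem_insert_of_mem h3)
      rw [hca₀] at this
      exact ha₀ this
    refine ⟨c p / c q, fun _ => ?_⟩
    have h3 : c p • col p + c q • col q ∈ colSpan V A := by
      have h2 : c p • col p + c q • col q = ∑ j ∈ A, (-(c j)) • col j := by
        have := hsplit
        rw [← add_assoc] at this
        have h4 : c p • col p + c q • col q = -∑ j ∈ A, c j • col j :=
          eq_neg_of_add_eq_zero_left this
        rw [h4, ← Finset.sum_neg_distrib]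
        apply Finset.sum_congr rfl
        intro j _
        rw [neg_smul]
      rw [h2]
      exact Submodule.sum_mem _ (fun j hj => Submodule.smul_mem _ _
        (Submodule.subset_span ⟨j, hj, rfl⟩))
    have h4 := Submodule.smul_mem (colSpan V A) (c q)⁻¹ h3
    have h5 : (c q)⁻¹ • (c p • col p + c q • col q) = (c p / c q) • col p + col q := by
      rw [smul_add, smul_smul, smul_smul, inv_mul_cancel₀ hcq, one_smul]
      congr 1
      congr 1
      field_simp
    rwa [h5] at h4
  choose f hf using key
  have hinj : Set.InjOn f ↑S := by
    intro A hA B hB hfAB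
    by_contra hne
    have hA' : A ∈ S := hA
    have hB' : B ∈ S := hB
    obtain ⟨hAsub, hAcard⟩ := Finset.mem_powersetCard.mp hA'
    obtain ⟨hBsub, hBcard⟩ := Finset.mem_powersetCard.mp hB'
    set w : Fin k → F := f A • col p + col q with hw
    have hw1 : w ∈ colSpan V {p, q} := by
      apply Submodule.add_mem
      · exact Submodule.smul_mem _ _ (Submodule.subset_span ⟨p, by simp, rfl⟩)
      · exact Submodule.subset_span ⟨q, by simp, rfl⟩
    have hw2 : w ∈ colSpan V A := hf A hA'
    have hw3 : w ∈ colSpan V B := by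
      rw [hw, hfAB]
      exact hf B hB'
    have hdisj : Disjoint ({p, q} : Finset (Fin n)) (A ∪ B) := by
      rw [Finset.disjoint_union_right]
      exact ⟨(Finset.disjoint_sdiff).mono_right hAsub,
        (Finset.disjoint_sdiff).mono_right hBsub⟩
    have hbot := hInt {p, q} A B hne hPQcard hAcard hBcard hdisj
    have hw0 : w = 0 := by
      have hmem : w ∈ colSpan V {p, q} ⊓ colSpan V A ⊓ colSpan V B := ⟨⟨hw1, hw2⟩, hw3⟩
      rwa [hbot, Submodule.mem_bot] at hmem
    set g : Fin n → F := fun j => if j = p then f A else if j = q then 1 else 0 with hg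
    have hgsum : ∑ j ∈ ({p, q} : Finset (Fin n)), g j • col j = 0 := by
      rw [Finset.sum_pair hpq]
      have hgp : g p = f A := by simp [hg]
      have hgq : g q = 1 := by simp [hg, Ne.symm hpq]
      rw [hgp, hgq, one_smul]
      exact hw0
    have hz := indep {p, q} (by rw [hPQcard]; omega) g hgsum q (by simp)
    rw [show g q = 1 from by simp [hg, Ne.symm hpq]] at hz
    exact one_ne_zero hz
  have hcard : S.card ≤ Fintype.card F := by
    rw [← Finset.card_univ]
    exact Finset.card_le_card_of_injOn f (fun a _ => Finset.mem_univ _) hinj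
  omega
end

section
/- Let V be a k×n MDS matrix over a field F (all k×k minors nonzero), let I ⊆ [n] with |I| = k − k' for some 0 < k' ≤ k, and let Π : F^k → F^{k'} be a surjective linear map with kernel equal to the span of the columns of V indexed by I. Define V' to be the k'×(n−|I|) matrix whose columns are Π(v_i) for i ∈ [n] \ I. Then V' is MDS, i.e., every k' columns of V' are linearly independent. -/
theorem stmt_9 (F : Type*) [Field F] (n k k' : ℕ) (hk' : 0 < k') (hkk : k' ≤ k)
    (V : Matrix (Fin k) (Fin n) F)
    (hMDS : ∀ A : Finset (Fin n), A.card = k →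
      LinearIndependent F (fun j : A => fun i => V i j.1))
    (I : Finset (Fin n)) (hI : I.card = k - k')
    (P : (Fin k → F) →ₗ[F] (Fin k' → F)) (hsurj : Function.Surjective P)
    (hker : LinearMap.ker P = colSpan V I) :
    ∀ J : Finset (Fin n), J.card = k' → Disjoint J I →
      LinearIndependent F (fun j : J => P (fun i => V i j.1)) := by
  intro J hJ hdisj
  set col : Fin n → (Fin k → F) := fun j => fun i => V i j with hcoldef
  have hAcard : (I ∪ J).card = k := by
    rw [Finset.card_union_of_disjoint hdisj.symm, hI, hJ, Nat.sub_add_cancel hkk]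
  have hind := hMDS (I ∪ J) hAcard
  rw [Fintype.linearIndependent_iff] at hind ⊢
  intro c hc
  -- the J-combination lies in ker P
  have hxker : (∑ j : J, c j • col j.1) ∈ colSpan V I := by
    rw [← hker, LinearMap.mem_ker, map_sum]
    simpa [map_smul] using hc
  rw [colSpan, Finsupp.mem_span_image_iff_linearCombination] at hxker
  obtain ⟨l, hl, hlx⟩ := hxker
  have hlsum : ∑ i ∈ I, l i • col i = ∑ j : J, c j • col j.1 := by
    rw [← hlx, Finsupp.linearCombination_apply_of_mem_supported F hl]
  -- combined coefficient function
  set g : Fin n → F := fun i => if h : i ∈ J then c ⟨i, h⟩ else -l i with hgdef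
  have hg0 : ∀ a : (I ∪ J : Finset (Fin n)), g a.1 = 0 := by
    apply hind
    have : ∑ a : (I ∪ J : Finset (Fin n)), g a.1 • col a.1
        = ∑ a ∈ I ∪ J, g a • col a := by
      exact Finset.sum_coe_sort (I ∪ J) (fun a => g a • col a)
    rw [this, Finset.sum_union hdisj.symm]
    have hIpart : ∑ a ∈ I, g a • col a = -∑ i ∈ I, l i • col i := by
      rw [← Finset.sum_neg_distrib]
      apply Finset.sum_congr rfl
      intro a ha
      have haJ : a ∉ J := fun h => (Finset.disjoint_left.mp hdisj h ha)
      simp [hgdef, haJ]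
    have hJpart : ∑ a ∈ J, g a • col a = ∑ j : J, c j • col j.1 := by
      rw [← Finset.sum_attach J (fun a => g a • col a)]
      apply Finset.sum_congr rfl
      intro a _
      simp [hgdef, a.2]
    rw [hIpart, hJpart, hlsum, neg_add_cancel]
  intro j
  have := hg0 ⟨j.1, Finset.mem_union_right _ j.2⟩
  simpa [hgdef, j.2] using this
end

section
/- Let F be a field, β_1,...,β_n ∈ F distinct, V the k×n Vandermonde matrix with columns (1, β_i,...,β_i^{k−1})^T. Let A_1, A_2, A_3 ⊆ [n] with i ∈ A_2 ∩ A_3, i ∉ A_1. Let V' be the (k−1)×n Vandermonde matrix on the same points. Then V_{A_1} ∩ V_{A_2} ∩ V_{A_3} = 0 if and only if V'_{A_1} ∩ V'_{A_2\{i}} ∩ V'_{A_3\{i}} = 0, provided |A_1| + |A_2| + |A_3| = 2k, each |A_j| ≤ k, and |A_1| ≤ k − 1. -/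
open Polynomial

/-- Decomposition statement: every poly of degree < m splits into three parts
vanishing on A1, A2, A3 respectively. -/
def Decomp (F : Type*) [Field F] {n : ℕ} (β : Fin n → F) (m : ℕ)
    (A1 A2 A3 : Finset (Fin n)) : Prop :=
  ∀ p : F[X], p.degree < (m : ℕ) → ∃ p1 p2 p3 : F[X],
    p1.degree < (m : ℕ) ∧ p2.degree < (m : ℕ) ∧ p3.degree < (m : ℕ) ∧
    (∀ j ∈ A1, p1.eval (β j) = 0) ∧ (∀ j ∈ A2, p2.eval (β j) = 0) ∧
    (∀ j ∈ A3, p3.eval (β j) = 0) ∧ p = p1 + p2 + p3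

section Bridge

variable {F : Type*} [Field F] {n m : ℕ}

/-- The functional associated to a polynomial. -/
noncomputable def polyDual (m : ℕ) (p : F[X]) : Module.Dual F (Fin m → F) :=
  ∑ r : Fin m, p.coeff (r : ℕ) • (LinearMap.proj r : (Fin m → F) →ₗ[F] F)

lemma polyDual_apply (p : F[X]) (x : Fin m → F) :
    polyDual m p x = ∑ r : Fin m, p.coeff (r : ℕ) * x r := by
  simp [polyDual]

lemma polyDual_add (p q : F[X]) : polyDual m (p + q) = polyDual m p + polyDual m q := by
  ext x
  simp [polyDual_apply, Finset.sum_add_distrib, add_mul]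

/-- The polynomial associated to a functional. -/
noncomputable def dualPoly (f : Module.Dual F (Fin m → F)) : F[X] :=
  ∑ r : Fin m, monomial (r : ℕ) (f (Pi.single r 1))

lemma dualPoly_degree (f : Module.Dual F (Fin m → F)) : (dualPoly f).degree < (m : ℕ) := by
  refine lt_of_le_of_lt (Polynomial.degree_sum_le _ _) ?_
  rw [Finset.sup_lt_iff (by exact_mod_cast WithBot.bot_lt_coe m)]
  intro r _
  exact lt_of_le_of_lt (Polynomial.degree_monomial_le _ _) (by exact_mod_cast r.2)

lemma dualPoly_coeff (f : Module.Dual F (Fin m → F)) (r : Fin m) :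
    (dualPoly f).coeff (r : ℕ) = f (Pi.single r 1) := by
  rw [dualPoly, Polynomial.finset_sum_coeff]
  rw [Finset.sum_eq_single r]
  · simp
  · intro b _ hb
    rw [Polynomial.coeff_monomial, if_neg (by simpa [Fin.ext_iff] using fun h => hb (Fin.ext h))]
  · simp

lemma eq_sum_single (x : Fin m → F) : x = ∑ r : Fin m, x r • (Pi.single r 1 : Fin m → F) := by
  funext j
  simp [Finset.sum_apply, Pi.single_apply]

lemma dual_expand (f : Module.Dual F (Fin m → F)) (x : Fin m → F) :
    f x = ∑ r : Fin m, x r * f (Pi.single r 1) := by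
  conv_lhs => rw [eq_sum_single x]
  simp [map_sum, smul_eq_mul]

lemma polyDual_dualPoly (f : Module.Dual F (Fin m → F)) : polyDual m (dualPoly f) = f := by
  apply LinearMap.ext; intro x
  rw [polyDual_apply, dual_expand f x]
  exact Finset.sum_congr rfl fun r _ => by rw [dualPoly_coeff, mul_comm]

lemma dualPoly_polyDual (p : F[X]) (hp : p.degree < (m : ℕ)) : dualPoly (polyDual m p) = p := by
  have hc : ∀ r : Fin m, (polyDual m p) (Pi.single r 1) = p.coeff (r : ℕ) := by
    intro r
    rw [polyDual_apply, Finset.sum_eq_single r] <;> simp +contextual [Pi.single_apply,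
      Fin.ext_iff, eq_comm]
  rcases eq_or_ne p 0 with rfl | hp0
  · simp [dualPoly, hc]
  · rw [dualPoly]
    conv_rhs => rw [Polynomial.as_sum_range' p m
      ((Polynomial.natDegree_lt_iff_degree_lt hp0).2 hp)]
    rw [Finset.sum_range fun i => monomial i (p.coeff i)]
    exact Finset.sum_congr rfl fun r _ => by rw [hc]

lemma eval_eq_polyDual (p : F[X]) (hp : p.degree < (m : ℕ)) (b : F) :
    p.eval b = polyDual m p (fun r => b ^ (r : ℕ)) := by
  rw [polyDual_apply]
  rcases eq_or_ne p 0 with rfl | hp0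
  · simp
  · rw [Polynomial.eval_eq_sum_range' ((Polynomial.natDegree_lt_iff_degree_lt hp0).2 hp),
      ← Fin.sum_univ_eq_sum_range]

lemma dualPoly_eval (f : Module.Dual F (Fin m → F)) (b : F) :
    (dualPoly f).eval b = f (fun r => b ^ (r : ℕ)) := by
  rw [eval_eq_polyDual _ (dualPoly_degree f), polyDual_dualPoly]

lemma mem_dualAnnihilator_colSpan (V : Matrix (Fin m) (Fin n) F) (A : Finset (Fin n))
    (f : Module.Dual F (Fin m → F)) :
    f ∈ (colSpan V A).dualAnnihilator ↔ ∀ j ∈ A, f (fun r => V r j) = 0 := by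
  rw [Submodule.mem_dualAnnihilator]
  constructor
  · intro h j hj
    exact h _ (Submodule.subset_span ⟨j, by simpa using hj, rfl⟩)
  · intro h w hw
    have : colSpan V A ≤ LinearMap.ker f := by
      rw [colSpan, Submodule.span_le]
      rintro _ ⟨j, hj, rfl⟩
      exact h j (by simpa using hj)
    exact this hw

lemma bridge (β : Fin n → F) (V : Matrix (Fin m) (Fin n) F)
    (hV : ∀ r j, V r j = β j ^ (r : ℕ)) (A1 A2 A3 : Finset (Fin n)) :
    (colSpan V A1 ⊓ colSpan V A2 ⊓ colSpan V A3 = ⊥) ↔ Decomp F β m A1 A2 A3 := by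
  have hcol : ∀ j, (fun r : Fin m => V r j) = fun r : Fin m => β j ^ (r : ℕ) := by
    intro j; funext r; exact hV r j
  have key : (colSpan V A1 ⊓ colSpan V A2 ⊓ colSpan V A3 = ⊥) ↔
      ((colSpan V A1).dualAnnihilator ⊔ (colSpan V A2).dualAnnihilator ⊔
        (colSpan V A3).dualAnnihilator = ⊤) := by
    rw [← Subspace.dualAnnihilator_inf_eq, ← Subspace.dualAnnihilator_inf_eq]
    constructor
    · intro h
      rw [h]
      ext f
      simp only [Submodule.mem_dualAnnihilator, Submodule.mem_top, iff_true]
      rintro w hw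
      rw [Submodule.mem_bot] at hw
      simp [hw]
    · intro h
      rw [eq_bot_iff]
      intro v hv
      rw [Submodule.mem_bot, ← Module.forall_dual_apply_eq_zero_iff F v]
      intro f
      have hf : f ∈ (colSpan V A1 ⊓ colSpan V A2 ⊓ colSpan V A3).dualAnnihilator := by
        rw [h]; trivial
      exact (Submodule.mem_dualAnnihilator f).1 hf v hv
  rw [key]
  constructor
  · intro h p hp
    have : polyDual m p ∈ (colSpan V A1).dualAnnihilator ⊔ (colSpan V A2).dualAnnihilator ⊔
        (colSpan V A3).dualAnnihilator := h ▸ Submodule.mem_top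
    obtain ⟨g, hg, f3, hf3, hs⟩ := Submodule.mem_sup.1 this
    obtain ⟨f1, hf1, f2, hf2, hs'⟩ := Submodule.mem_sup.1 hg
    refine ⟨dualPoly f1, dualPoly f2, dualPoly f3, dualPoly_degree _, dualPoly_degree _,
      dualPoly_degree _, ?_, ?_, ?_, ?_⟩
    · intro j hj
      rw [dualPoly_eval, ← hcol]
      exact (mem_dualAnnihilator_colSpan V A1 f1).1 hf1 j hj
    · intro j hj
      rw [dualPoly_eval, ← hcol]
      exact (mem_dualAnnihilator_colSpan V A2 f2).1 hf2 j hj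
    · intro j hj
      rw [dualPoly_eval, ← hcol]
      exact (mem_dualAnnihilator_colSpan V A3 f3).1 hf3 j hj
    · have : polyDual m p = f1 + f2 + f3 := by rw [← hs, ← hs']
      calc p = dualPoly (polyDual m p) := (dualPoly_polyDual p hp).symm
        _ = dualPoly (f1 + f2 + f3) := by rw [this]
        _ = dualPoly f1 + dualPoly f2 + dualPoly f3 := by
            simp [dualPoly, map_add, Finset.sum_add_distrib]
  · intro h
    rw [eq_top_iff]
    intro f _
    obtain ⟨p1, p2, p3, hd1, hd2, hd3, hv1, hv2, hv3, hsum⟩ := h (dualPoly f) (dualPoly_degree f)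
    have hf : f = polyDual m p1 + polyDual m p2 + polyDual m p3 := by
      rw [← polyDual_add, ← polyDual_add, ← hsum, polyDual_dualPoly]
    rw [hf]
    have mem : ∀ (p : F[X]) (A : Finset (Fin n)), p.degree < (m : ℕ) →
        (∀ j ∈ A, p.eval (β j) = 0) →
        polyDual m p ∈ (colSpan V A).dualAnnihilator := by
      intro p A hd hv
      rw [mem_dualAnnihilator_colSpan]
      intro j hj
      rw [hcol, ← eval_eq_polyDual p hd]
      exact hv j hj
    exact Submodule.add_mem _ (Submodule.add_mem _
      (Submodule.mem_sup_left (Submodule.mem_sup_left (mem p1 A1 hd1 hv1)))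
      (Submodule.mem_sup_left (Submodule.mem_sup_right (mem p2 A2 hd2 hv2))))
      (Submodule.mem_sup_right (mem p3 A3 hd3 hv3))

end Bridge

section Step

variable {F : Type*} [Field F] {n : ℕ}

lemma deg_mul_lt {K : ℕ} {a : F} {q : F[X]} :
    ((X - C a) * q).degree < ((K + 1 : ℕ) : WithBot ℕ) ↔ q.degree < (K : ℕ) := by
  rcases eq_or_ne q 0 with rfl | h0
  · rw [mul_zero, degree_zero]
    exact iff_of_true (by exact_mod_cast WithBot.bot_lt_coe (K + 1)) (WithBot.bot_lt_coe K)
  · rw [degree_mul, degree_X_sub_C, Nat.cast_add, Nat.cast_one, add_comm (1 : WithBot ℕ)]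
    exact WithBot.add_lt_add_iff_right (by simp)

lemma poly_step {K : ℕ} (β : Fin n → F) (hβ : Function.Injective β)
    (A1 A2 A3 : Finset (Fin n)) (i : Fin n)
    (hi2 : i ∈ A2) (hi3 : i ∈ A3) (hi1 : i ∉ A1) (h1 : A1.card ≤ K) :
    Decomp F β (K + 1) A1 A2 A3 ↔ Decomp F β K A1 (A2.erase i) (A3.erase i) := by
  have hXC : (X - C (β i)) ≠ (0 : F[X]) := X_sub_C_ne_zero (β i)
  constructor
  · intro h g hg
    obtain ⟨p1, p2, p3, hd1, hd2, hd3, hv1, hv2, hv3, heq⟩ :=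
      h ((X - C (β i)) * g) (deg_mul_lt.2 hg)
    have hr2 : p2.eval (β i) = 0 := hv2 i hi2
    have hr3 : p3.eval (β i) = 0 := hv3 i hi3
    have hr1 : p1.eval (β i) = 0 := by
      have := congrArg (Polynomial.eval (β i)) heq
      simp [hr2, hr3] at this
      simpa using this.symm
    obtain ⟨q1, hq1⟩ := (dvd_iff_isRoot.2 hr1)
    obtain ⟨q2, hq2⟩ := (dvd_iff_isRoot.2 hr2)
    obtain ⟨q3, hq3⟩ := (dvd_iff_isRoot.2 hr3)
    have key : ∀ (p q : F[X]) (A : Finset (Fin n)), p = (X - C (β i)) * q →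
        (∀ j ∈ A, p.eval (β j) = 0) → ∀ j ∈ A, j ≠ i → q.eval (β j) = 0 := by
      intro p q A hpq hv j hj hji
      have := hv j hj
      rw [hpq, eval_mul, eval_sub, eval_X, eval_C] at this
      rcases mul_eq_zero.1 this with h' | h'
      · exact absurd (hβ (sub_eq_zero.1 h')) hji
      · exact h'
    refine ⟨q1, q2, q3, deg_mul_lt.1 (hq1 ▸ hd1), deg_mul_lt.1 (hq2 ▸ hd2),
      deg_mul_lt.1 (hq3 ▸ hd3), ?_, ?_, ?_, ?_⟩
    · exact fun j hj => key p1 q1 A1 hq1 hv1 j hj (fun he => hi1 (he ▸ hj))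
    · exact fun j hj => key p2 q2 A2 hq2 hv2 j (Finset.mem_of_mem_erase hj)
        (Finset.ne_of_mem_erase hj)
    · exact fun j hj => key p3 q3 A3 hq3 hv3 j (Finset.mem_of_mem_erase hj)
        (Finset.ne_of_mem_erase hj)
    · apply mul_left_cancel₀ hXC
      rw [heq, hq1, hq2, hq3]
      ring
  · intro h f hf
    set P : F[X] := ∏ j ∈ A1, (X - C (β j)) with hP
    have hPdeg : P.degree ≤ (K : ℕ) := by
      rw [hP, degree_prod]
      simp only [degree_X_sub_C, Finset.sum_const, nsmul_eq_mul, mul_one]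
      exact_mod_cast Nat.cast_le.2 h1
    have hPi : P.eval (β i) ≠ 0 := by
      rw [hP, eval_prod]
      refine Finset.prod_ne_zero_iff.2 fun j hj => ?_
      simp only [eval_sub, eval_X, eval_C, sub_ne_zero]
      exact fun he => hi1 ((hβ he) ▸ hj)
    set c : F := f.eval (β i) / P.eval (β i) with hc
    have hroot : (f - C c * P).eval (β i) = 0 := by
      simp [hc, div_mul_cancel₀ _ hPi]
    obtain ⟨g, hg⟩ := dvd_iff_isRoot.2 hroot
    have hCcP : (C c * P).degree < ((K + 1 : ℕ) : WithBot ℕ) := by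
      refine lt_of_le_of_lt (le_trans (le_of_eq (congrArg degree (smul_eq_C_mul c).symm))
        (le_trans (degree_smul_le c P) hPdeg)) ?_
      exact_mod_cast Nat.lt_succ_self K
    have hgdeg : g.degree < (K : ℕ) := by
      refine (deg_mul_lt (a := β i)).1 ?_
      rw [← hg]
      exact lt_of_le_of_lt (degree_sub_le _ _) (max_lt hf hCcP)
    obtain ⟨q1, q2, q3, hd1, hd2, hd3, hv1, hv2, hv3, heq⟩ := h g hgdeg
    refine ⟨C c * P + (X - C (β i)) * q1, (X - C (β i)) * q2, (X - C (β i)) * q3,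
      lt_of_le_of_lt (degree_add_le _ _) (max_lt hCcP (deg_mul_lt.2 hd1)),
      deg_mul_lt.2 hd2, deg_mul_lt.2 hd3, ?_, ?_, ?_, ?_⟩
    · intro j hj
      have hPj : P.eval (β j) = 0 := by
        rw [hP, eval_prod]
        exact Finset.prod_eq_zero hj (by simp)
      simp [hPj, hv1 j hj]
    · intro j hj
      rcases eq_or_ne j i with rfl | hji
      · simp
      · simp [hv2 j (Finset.mem_erase.2 ⟨hji, hj⟩)]
    · intro j hj
      rcases eq_or_ne j i with rfl | hji
      · simp
      · simp [hv3 j (Finset.mem_erase.2 ⟨hji, hj⟩)]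
    · have : f = C c * P + (X - C (β i)) * g := by
        rw [← hg]; ring
      rw [this, heq]
      ring

end Step

theorem stmt_18 (F : Type*) [Field F] (n k : ℕ) (hk : 1 ≤ k)
    (β : Fin n → F) (hβ : Function.Injective β)
    (V : Matrix (Fin k) (Fin n) F) (hV : ∀ r j, V r j = β j ^ (r : ℕ))
    (V' : Matrix (Fin (k - 1)) (Fin n) F) (hV' : ∀ r j, V' r j = β j ^ (r : ℕ))
    (A1 A2 A3 : Finset (Fin n)) (i : Fin n)
    (hi2 : i ∈ A2) (hi3 : i ∈ A3) (hi1 : i ∉ A1)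
    (hsum : A1.card + A2.card + A3.card = 2 * k)
    (h1 : A1.card ≤ k - 1) (h2 : A2.card ≤ k) (h3 : A3.card ≤ k) :
    (colSpan V A1 ⊓ colSpan V A2 ⊓ colSpan V A3 = ⊥ ↔
      colSpan V' A1 ⊓ colSpan V' (A2.erase i) ⊓ colSpan V' (A3.erase i) = ⊥) := by
  obtain ⟨K, rfl⟩ : ∃ K, k = K + 1 := ⟨k - 1, (Nat.succ_pred_eq_of_pos hk).symm⟩
  rw [bridge β V hV A1 A2 A3, bridge β V' hV' A1 (A2.erase i) (A3.erase i)]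
  exact poly_step β hβ A1 A2 A3 i hi2 hi3 hi1 (by simpa using h1)
end
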